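/- arXiv:2411.00757 — 2 statements merged into one kernel-verified Lean document; each statement's English description precedes it below -/
import Mathlib

section
/- Let K ⊆ ℂⁿ be compact, Z ⊆ ℂⁿ a Lebesgue null set, and ψ : (ℂⁿ \ Z) × ℂˡ → ℂ a measurable function supported in K × ℂˡ, bounded on (ℂⁿ \ Z) × K' for every bounded K' ⊆ ℂˡ, and such that ψ(z, −) is holomorphic for each z and each partial derivative ∂ψ/∂xₖ also satisfies the boundedness condition. Let f₁, …, f_r ∈ ℂ[z₁,…,z_n] be nonconstant polynomials. Then the function L_ψ(a, x) := ∫_{ℂⁿ} ∏ᵢ |fᵢ(z)|^{2aᵢ} ψ(z, x) dz is holomorphic on 𝕌ʳ × ℂˡ, where 𝕌 = {s ∈ ℂ : Re s > 0}. -/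
open MeasureTheory


lemma mv_null : ∀ (n : ℕ) (p : MvPolynomial (Fin n) ℂ), p ≠ 0 →
    volume {z : Fin n → ℂ | MvPolynomial.eval z p = 0} = 0 := by
  intro n
  induction n with
  | zero =>
      intro p hp
      have : {z : Fin 0 → ℂ | MvPolynomial.eval z p = 0} = ∅ := by
        ext z
        simp only [Set.mem_setOf_eq, Set.mem_empty_iff_false, iff_false]
        rw [MvPolynomial.eq_C_of_isEmpty p, MvPolynomial.eval_C]
        intro h
        apply hp
        rw [MvPolynomial.eq_C_of_isEmpty p, h, map_zero]
      rw [this, measure_empty]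
  | succ n ih =>
      intro p hp
      set F := MvPolynomial.finSuccEquiv ℂ n p with hFdef
      have hF0 : F ≠ 0 := by
        simp only [hFdef, ne_eq, EmbeddingLike.map_eq_zero_iff]
        exact hp
      obtain ⟨k, hk⟩ : ∃ k, F.coeff k ≠ 0 := by
        by_contra h
        push_neg at h
        exact hF0 (Polynomial.ext fun k => by simp [h k])
      set e : ((Fin (n+1)) → ℂ) ≃ᵐ ℂ × (Fin n → ℂ) :=
        MeasurableEquiv.piFinSuccAbove (fun _ => ℂ) 0 with hedef
      have hmp : MeasurePreserving e volume
          ((volume : Measure ℂ).prod (volume : Measure (Fin n → ℂ))) := by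
        have := MeasureTheory.measurePreserving_piFinSuccAbove
          (fun _ : Fin (n+1) => (volume : Measure ℂ)) 0
        rw [hedef]; simpa [volume_pi] using this
      have hswap : MeasurePreserving (Prod.swap : ℂ × (Fin n → ℂ) → (Fin n → ℂ) × ℂ)
          ((volume : Measure ℂ).prod volume) ((volume : Measure (Fin n → ℂ)).prod volume) :=
        MeasureTheory.Measure.measurePreserving_swap
      have hcomp := hswap.comp hmp
      set t : Set ((Fin n → ℂ) × ℂ) :=
        {q | MvPolynomial.eval (Fin.cons q.2 q.1) p = 0} with htdef
      have htmeas : MeasurableSet t := by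
        have hc : Continuous fun q : (Fin n → ℂ) × ℂ =>
            MvPolynomial.eval (Fin.cons q.2 q.1 : Fin (n+1) → ℂ) p :=
          (MvPolynomial.continuous_eval p).comp (by
            apply continuous_pi
            intro j
            refine Fin.cases ?_ ?_ j
            · simpa using (continuous_snd : Continuous fun q : (Fin n → ℂ) × ℂ => q.2)
            · intro i
              simpa [Function.comp_def] using ((continuous_apply i).comp
                (continuous_fst : Continuous fun q : (Fin n → ℂ) × ℂ => q.1)))
        exact hc.measurable (measurableSet_singleton 0)
      have hpre : (Prod.swap ∘ e) ⁻¹' t = {z : Fin (n+1) → ℂ | MvPolynomial.eval z p = 0} := by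
        ext z
        simp only [Set.mem_preimage, Function.comp_apply, htdef, Set.mem_setOf_eq]
        have hz : (Prod.swap (e z)).2 = z 0 := rfl
        have hz1 : (Prod.swap (e z)).1 = fun j => z (Fin.succAbove 0 j) := rfl
        rw [hz, hz1]
        have : (Fin.cons (z 0) (fun j => z (Fin.succAbove 0 j)) : Fin (n+1) → ℂ) = z := by
          ext j
          refine Fin.cases ?_ ?_ j
          · simp
          · intro i; simp
        rw [this]
      have key : volume {z : Fin (n+1) → ℂ | MvPolynomial.eval z p = 0}
          = ((volume : Measure (Fin n → ℂ)).prod volume) t := by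
        rw [← hpre]
        exact (hcomp.measure_preimage htmeas.nullMeasurableSet)
      rw [key]
      rw [MeasureTheory.Measure.measure_prod_null htmeas]
      have hB := ih (F.coeff k) hk
      have hae : ∀ᵐ s : Fin n → ℂ, MvPolynomial.eval s (F.coeff k) ≠ 0 := by
        rw [ae_iff]
        simpa using hB
      filter_upwards [hae] with s hs
      have hq : Polynomial.map (MvPolynomial.eval s) F ≠ 0 := by
        intro h
        apply hs
        have := congrArg (fun q => Polynomial.coeff q k) h
        simpa [Polynomial.coeff_map] using this
      have : Prod.mk s ⁻¹' t = {y : ℂ | Polynomial.IsRoot (Polynomial.map (MvPolynomial.eval s) F) y} := by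
        ext y
        simp only [Set.mem_preimage, htdef, Set.mem_setOf_eq, Polynomial.IsRoot]
        rw [MvPolynomial.eval_eq_eval_mv_eval']
      simp only [Pi.zero_apply]
      rw [this]
      exact Set.Countable.measure_zero (Polynomial.finite_setOf_isRoot hq).countable _


lemma aux_rpow_le {c C δ Δ t : ℝ} (hc : 0 < c) (hcC : c ≤ C) (hδ : 0 < δ)
    (hδt : δ ≤ t) (htΔ : t ≤ Δ) :
    c ^ (2*t) ≤ (max 1 C) ^ (2*Δ) := by
  have hb1 : (1:ℝ) ≤ max 1 C := le_max_left _ _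
  have hΔ0 : 0 ≤ 2*Δ := by nlinarith
  rcases le_or_gt c 1 with h1 | h1
  · calc c ^ (2*t) ≤ 1 := Real.rpow_le_one hc.le h1 (by nlinarith)
    _ ≤ (max 1 C) ^ (2*Δ) := Real.one_le_rpow hb1 hΔ0
  · calc c ^ (2*t) ≤ c ^ (2*Δ) :=
        Real.rpow_le_rpow_of_exponent_le h1.le (by nlinarith)
    _ ≤ (max 1 C) ^ (2*Δ) :=
        Real.rpow_le_rpow hc.le (le_trans hcC (le_max_right _ _)) hΔ0

lemma aux_rpow_log_le {c C δ Δ t : ℝ} (hc : 0 < c) (hcC : c ≤ C) (hδ : 0 < δ)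
    (hδt : δ ≤ t) (htΔ : t ≤ Δ) :
    c ^ (2*t) * |Real.log c| ≤ 1/(2*δ) + (max 1 C) ^ (2*Δ) * |Real.log (max 1 C)| := by
  have hb1 : (1:ℝ) ≤ max 1 C := le_max_left _ _
  rcases le_or_gt c 1 with h1 | h1
  · have key : c ^ (2*t) * |Real.log c| ≤ 1/(2*δ) := by
      have h2 : c ^ (2*t) ≤ c ^ (2*δ) :=
        Real.rpow_le_rpow_of_exponent_ge hc h1 (by nlinarith)
      have h3 := Real.abs_log_mul_self_rpow_lt c (2*δ) hc h1 (by nlinarith)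
      have : c ^ (2*t) * |Real.log c| ≤ c ^ (2*δ) * |Real.log c| := by
        apply mul_le_mul_of_nonneg_right h2 (abs_nonneg _)
      refine le_trans this ?_
      calc c ^ (2*δ) * |Real.log c| = |Real.log c * c ^ (2*δ)| := by
            rw [abs_mul, abs_of_nonneg (Real.rpow_nonneg hc.le _)]; ring
        _ ≤ 1/(2*δ) := h3.le
    nlinarith [mul_nonneg (Real.rpow_nonneg (le_trans zero_le_one hb1) (2*Δ)) (abs_nonneg (Real.log (max 1 C)))]
  · have hl1 : |Real.log c| ≤ |Real.log (max 1 C)| := by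
      rw [abs_of_nonneg (Real.log_nonneg h1.le),
        abs_of_nonneg (Real.log_nonneg hb1)]
      exact Real.log_le_log (by positivity) (le_trans hcC (le_max_right _ _))
    have h2 := aux_rpow_le hc hcC hδ hδt htΔ
    have : c ^ (2*t) * |Real.log c| ≤ (max 1 C) ^ (2*Δ) * |Real.log (max 1 C)| :=
      mul_le_mul h2 hl1 (abs_nonneg _) (Real.rpow_nonneg (by positivity) _)
    have hpos : 0 < 1/(2*δ) := by positivity
    linarith

lemma measurable_cpow_const {α : Type*} [MeasurableSpace α] {f : α → ℂ} (hf : Measurable f)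
    (w : ℂ) : Measurable fun x => f x ^ w := by
  have h : (fun x => f x ^ w) = fun x =>
      if f x = 0 then (if w = 0 then 1 else 0) else Complex.exp (Complex.log (f x) * w) := by
    funext x; rw [Complex.cpow_def]
  rw [h]
  exact Measurable.ite (hf (measurableSet_singleton 0)) measurable_const
    (Complex.measurable_exp.comp ((Complex.measurable_log.comp hf).mul_const w))

lemma aux_fderiv_aemeasurable {n l : ℕ} {Z : Set (Fin n → ℂ)} (hZ : volume Z = 0)
    {ψ : (Fin n → ℂ) → (Fin l → ℂ) → ℂ}
    (hmeas : Measurable fun p : (Fin n → ℂ) × (Fin l → ℂ) => ψ p.1 p.2)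
    (hhol : ∀ z ∉ Z, Differentiable ℂ (ψ z))
    (x₀ v : Fin l → ℂ) :
    AEMeasurable (fun z : Fin n → ℂ => fderiv ℂ (ψ z) x₀ v) volume := by
  set t : ℕ → ℝ := fun m => 1/(m+1) with htdef
  set g : ℕ → (Fin n → ℂ) → ℂ := fun m z =>
    (ψ z (x₀ + ((t m : ℝ) : ℂ) • v) - ψ z x₀) / ((t m : ℝ) : ℂ) with hgdef
  have hgm : ∀ m, Measurable (g m) := by
    intro m
    apply Measurable.div_const
    exact ((hmeas.comp (measurable_id.prodMk measurable_const)).sub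
      (hmeas.comp (measurable_id.prodMk measurable_const)))
  have hZ' : ∀ᵐ z : Fin n → ℂ, z ∉ Z := by
    rw [ae_iff]
    simpa using measure_mono_null (fun z hz => by simpa using hz) hZ
  have htend : ∀ᵐ z : Fin n → ℂ, Filter.Tendsto (fun m => g m z) Filter.atTop
      (nhds (fderiv ℂ (ψ z) x₀ v)) := by
    filter_upwards [hZ'] with z hz
    have h1 : HasFDerivAt (ψ z) (fderiv ℂ (ψ z) x₀) (x₀ + (0:ℂ) • v) := by
      simpa using ((hhol z hz) x₀).hasFDerivAt
    have h2 : HasDerivAt (fun s : ℂ => x₀ + s • v) v 0 := by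
      simpa using ((hasDerivAt_id (0:ℂ)).smul_const v).const_add x₀
    have hd : HasDerivAt (fun s : ℂ => ψ z (x₀ + s • v)) (fderiv ℂ (ψ z) x₀ v) 0 :=
      h1.comp_hasDerivAt 0 h2
    have hslope := hasDerivAt_iff_tendsto_slope.mp hd
    have h0 : Filter.Tendsto (fun m : ℕ => ((t m : ℝ) : ℂ)) Filter.atTop (nhds 0) := by
      have h0' := tendsto_one_div_add_atTop_nhds_zero_nat (𝕜 := ℝ)
      have := (Complex.continuous_ofReal.tendsto 0).comp h0'
      refine this.congr ?_
      intro m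
      simp [htdef, Function.comp]
    have hseq : Filter.Tendsto (fun m : ℕ => ((t m : ℝ) : ℂ)) Filter.atTop (nhdsWithin 0 {x | x ≠ 0}) := by
      apply tendsto_nhdsWithin_of_tendsto_nhds_of_eventually_within _ h0
      apply Filter.Eventually.of_forall
      intro m
      simp only [Set.mem_setOf_eq, ne_eq, Complex.ofReal_eq_zero, htdef]
      positivity
    have := hslope.comp hseq
    refine this.congr ?_
    intro m
    simp only [Function.comp_apply, slope_def_field, hgdef]
    simp [zero_smul]
  exact aemeasurable_of_tendsto_metrizable_ae Filter.atTop (fun m => (hgm m).aemeasurable) htend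


lemma aux_opnorm_pi {m : ℕ} (D : (Fin m → ℂ) →L[ℂ] ℂ) (M : Fin m → ℝ)
    (hM : ∀ k, ‖D (Pi.single k 1)‖ ≤ M k) : ‖D‖ ≤ ∑ k, M k := by
  apply ContinuousLinearMap.opNorm_le_bound
  · exact Finset.sum_nonneg fun k _ => le_trans (norm_nonneg _) (hM k)
  intro w
  have hw : w = ∑ k, w k • (Pi.single k (1:ℂ) : Fin m → ℂ) := by
    ext j; simp [Pi.single_apply]
  have hDw : D w = ∑ k, w k • D (Pi.single k (1:ℂ)) := by
    conv_lhs => rw [hw]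
    rw [map_sum]
    exact Finset.sum_congr rfl fun k _ => by rw [ContinuousLinearMap.map_smul]
  rw [hDw]
  calc ‖∑ k, w k • D (Pi.single k 1)‖ ≤ ∑ k, ‖w k • D (Pi.single k 1)‖ :=
        norm_sum_le _ _
    _ = ∑ k, ‖w k‖ * ‖D (Pi.single k 1)‖ := by simp [norm_smul]
    _ ≤ ∑ k, M k * ‖w‖ := by
        refine Finset.sum_le_sum fun k _ => ?_
        calc ‖w k‖ * ‖D (Pi.single k 1)‖ ≤ ‖w‖ * M k := by
              apply mul_le_mul (norm_le_pi_norm w k) (hM k) (norm_nonneg _) (norm_nonneg _)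
          _ = M k * ‖w‖ := mul_comm _ _
    _ = (∑ k, M k) * ‖w‖ := by rw [Finset.sum_mul]

set_option maxHeartbeats 2000000

/-- For suitable ψ (measurable, compactly supported in z, bounded on bounded x-sets,
    holomorphic in x with similarly bounded partials) and nonconstant polynomials
    f₁,…,f_r, the function L_ψ(a,x) = ∫ ∏|fᵢ(z)|^{2aᵢ} ψ(z,x) dz is holomorphic on
    𝕌^r × ℂ^l, where 𝕌 = {Re > 0}. -/
theorem stmt3 (n r l : ℕ) (f : Fin r → MvPolynomial (Fin n) ℂ)
    (hf : ∀ i, 0 < (f i).totalDegree)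
    (K : Set (Fin n → ℂ)) (hK : IsCompact K)
    (Z : Set (Fin n → ℂ)) (hZ : volume Z = 0)
    (ψ : (Fin n → ℂ) → (Fin l → ℂ) → ℂ)
    (hmeas : Measurable fun p : (Fin n → ℂ) × (Fin l → ℂ) => ψ p.1 p.2)
    (hsupp : ∀ z ∉ K, ∀ x, ψ z x = 0)
    (hbdd : ∀ K' : Set (Fin l → ℂ), Bornology.IsBounded K' →
      ∃ M, ∀ z ∉ Z, ∀ x ∈ K', ‖ψ z x‖ ≤ M)
    (hhol : ∀ z ∉ Z, Differentiable ℂ (ψ z))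
    (hdbdd : ∀ (k : Fin l) (K' : Set (Fin l → ℂ)), Bornology.IsBounded K' →
      ∃ M, ∀ z ∉ Z, ∀ x ∈ K', ‖fderiv ℂ (ψ z) x (Pi.single k 1)‖ ≤ M) :
    DifferentiableOn ℂ
      (fun p : (Fin r → ℂ) × (Fin l → ℂ) =>
        ∫ z : Fin n → ℂ,
          (∏ i, ((‖MvPolynomial.eval z (f i)‖ : ℝ) : ℂ) ^ (2 * p.1 i)) * ψ z p.2)
      {p : (Fin r → ℂ) × (Fin l → ℂ) | ∀ i, 0 < (p.1 i).re} := by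
  classical
  have hf0 : ∀ i, f i ≠ 0 := by
    intro i h
    have := hf i
    rw [h, MvPolynomial.totalDegree_zero] at this
    exact lt_irrefl 0 this
  set E : Set (Fin n → ℂ) := Z ∪ ⋃ i, {z | MvPolynomial.eval z (f i) = 0} with hEdef
  have hE : volume E = 0 :=
    measure_union_null hZ (measure_iUnion_null fun i => mv_null n (f i) (hf0 i))
  have haeE : ∀ᵐ z : Fin n → ℂ, z ∉ E := by
    rw [ae_iff]; simpa using hE
  have hopen : IsOpen {p : (Fin r → ℂ) × (Fin l → ℂ) | ∀ i, 0 < (p.1 i).re} := by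
    rw [show {p : (Fin r → ℂ) × (Fin l → ℂ) | ∀ i, 0 < (p.1 i).re}
        = ⋂ i, {p : (Fin r → ℂ) × (Fin l → ℂ) | 0 < (p.1 i).re} by ext p; simp]
    exact isOpen_iInter_of_finite fun i => isOpen_lt continuous_const
      (Complex.continuous_re.comp ((continuous_apply i).comp continuous_fst))
  intro p₀ hp₀
  apply DifferentiableAt.differentiableWithinAt
  obtain ⟨ε', hε'pos, hball'⟩ := Metric.isOpen_iff.1 hopen p₀ hp₀
  set ε : ℝ := min (ε'/2) 1 with hεdef
  have hε : 0 < ε := lt_min (by linarith) one_pos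
  have hε1 : ε ≤ 1 := min_le_right _ _
  have hball2 : Metric.ball p₀ (2*ε) ⊆ {p : (Fin r → ℂ) × (Fin l → ℂ) | ∀ i, 0 < (p.1 i).re} := by
    refine Set.Subset.trans (Metric.ball_subset_ball ?_) hball'
    have := min_le_left (ε'/2) 1
    calc 2*ε ≤ 2*(ε'/2) := by linarith
      _ = ε' := by ring
  have hlow : ∀ p ∈ Metric.ball p₀ ε, ∀ i, ε ≤ ((p.1 : Fin r → ℂ) i).re := by
    intro p hp i
    by_contra hlt
    push_neg at hlt
    set q : (Fin r → ℂ) × (Fin l → ℂ) := (Function.update p.1 i (p.1 i - (ε:ℂ)), p.2) with hq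
    have hdq : dist q p ≤ ε := by
      rw [Prod.dist_eq]
      refine max_le ?_ (by simp [hq, hε.le])
      refine (dist_pi_le_iff hε.le).2 fun j => ?_
      rcases eq_or_ne j i with rfl | hne
      · simp only [hq, Function.update_self]
        rw [Complex.dist_eq]
        simp [abs_of_pos hε]
      · simp [hq, Function.update_of_ne hne, hε.le]
    have hq2 : q ∈ Metric.ball p₀ (2*ε) := by
      have h1 : dist q p₀ ≤ dist q p + dist p p₀ := dist_triangle _ _ _
      have h2 := Metric.mem_ball.1 hp
      rw [Metric.mem_ball]
      linarith
    have h3 := hball2 hq2 i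
    simp only [hq, Function.update_self, Complex.sub_re, Complex.ofReal_re] at h3
    linarith
  set Δ : ℝ := ‖p₀‖ + 1 with hΔdef
  have hΔ1 : (1:ℝ) ≤ Δ := by
    have := norm_nonneg p₀; simp only [hΔdef]; linarith
  have hhigh : ∀ p ∈ Metric.ball p₀ ε, ∀ i, ((p.1 : Fin r → ℂ) i).re ≤ Δ := by
    intro p hp i
    have h1 : |(p.1 i).re| ≤ ‖p.1 i‖ := Complex.abs_re_le_norm _
    have h2 : ‖p.1 i‖ ≤ ‖p.1‖ := norm_le_pi_norm p.1 i
    have h3 : ‖p.1‖ ≤ ‖p‖ := norm_fst_le p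
    have h4 : ‖p‖ - ‖p₀‖ ≤ ‖p - p₀‖ := norm_sub_norm_le _ _
    have h5 : ‖p - p₀‖ < ε := by rw [← dist_eq_norm]; exact hp
    have h6 : ‖p.1 i‖ = ‖p.1 i‖ := rfl
    have := abs_le.1 h1
    simp only [hΔdef]
    linarith
  -- uniform bound on |f i| over K
  obtain ⟨C, hC⟩ : ∃ C, ∀ i, ∀ z ∈ K, ‖MvPolynomial.eval z (f i)‖ ≤ C := by
    obtain ⟨C, hC⟩ := hK.exists_bound_of_continuousOn
      (f := fun z => fun i => MvPolynomial.eval z (f i))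
      (Continuous.continuousOn (continuous_pi fun i => MvPolynomial.continuous_eval (f i)))
    refine ⟨C, fun i z hz => ?_⟩
    calc ‖MvPolynomial.eval z (f i)‖
        = ‖(fun j => MvPolynomial.eval z (f j)) i‖ := rfl
      _ ≤ ‖fun j => MvPolynomial.eval z (f j)‖ := norm_le_pi_norm (fun j => MvPolynomial.eval z (f j)) i
      _ ≤ C := hC z hz
  set b : ℝ := max 1 C with hbdef
  have hb1 : (1:ℝ) ≤ b := le_max_left _ _
  set β : ℝ := b ^ (2*Δ) with hβdef
  have hβ1 : (1:ℝ) ≤ β := Real.one_le_rpow hb1 (by linarith)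
  have hβ0 : (0:ℝ) ≤ β := le_trans zero_le_one hβ1
  set B1 : ℝ := β ^ r with hB1def
  have hB11 : (1:ℝ) ≤ B1 := one_le_pow₀ hβ1
  have hB10 : (0:ℝ) ≤ B1 := le_trans zero_le_one hB11
  set D₀ : ℝ := 1/(2*ε) + β * |Real.log b| with hD₀def
  have hD₀0 : (0:ℝ) ≤ D₀ := by
    rw [hD₀def]
    have : (0:ℝ) ≤ 1/(2*ε) := by positivity
    have h2 : (0:ℝ) ≤ β * |Real.log b| := mul_nonneg hβ0 (abs_nonneg _)
    linarith
  obtain ⟨Mψ₀, hMψ₀⟩ := hbdd (Metric.closedBall p₀.2 ε) Metric.isBounded_closedBall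
  set Mψ : ℝ := max Mψ₀ 0 with hMψdef
  have hMψ : ∀ z ∉ Z, ∀ x ∈ Metric.closedBall p₀.2 ε, ‖ψ z x‖ ≤ Mψ :=
    fun z hz x hx => le_trans (hMψ₀ z hz x hx) (le_max_left _ _)
  have hMψ0 : (0:ℝ) ≤ Mψ := le_max_right _ _
  choose Md hMd using fun k => hdbdd k (Metric.closedBall p₀.2 ε) Metric.isBounded_closedBall
  set SM : ℝ := ∑ k, max (Md k) 0 with hSMdef
  have hSM0 : (0:ℝ) ≤ SM := Finset.sum_nonneg fun k _ => le_max_right _ _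
  set CC : ℝ := B1 * SM + Mψ * (2 * r * (B1 * D₀)) with hCCdef
  set bound : (Fin n → ℂ) → ℝ := K.indicator (fun _ => CC) with hbounddef
  -- abbreviations
  set c : Fin r → (Fin n → ℂ) → ℝ := fun i z => ‖MvPolynomial.eval z (f i)‖ with hcdef
  set T : (Fin n → ℂ) → (Fin r → ℂ) →L[ℂ] ℂ :=
    fun z => ∑ i, (2 * Complex.log (c i z)) • (ContinuousLinearMap.proj i) with hTdef
  set F' : ((Fin r → ℂ) × (Fin l → ℂ)) → (Fin n → ℂ) →
      (((Fin r → ℂ) × (Fin l → ℂ)) →L[ℂ] ℂ) := fun p z =>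
    (∏ i, ((c i z : ℝ) : ℂ) ^ (2 * p.1 i)) •
      ((fderiv ℂ (ψ z) p.2).comp (ContinuousLinearMap.snd ℂ (Fin r → ℂ) (Fin l → ℂ)))
    + (ψ z p.2) • ((∏ i, ((c i z : ℝ) : ℂ) ^ (2 * p.1 i)) •
      ((T z).comp (ContinuousLinearMap.fst ℂ (Fin r → ℂ) (Fin l → ℂ)))) with hF'def
  -- basic facts per z
  have hcpos : ∀ z, z ∉ E → ∀ i, 0 < c i z := by
    intro z hz i
    have : MvPolynomial.eval z (f i) ≠ 0 := by
      intro h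
      exact hz (Or.inr (Set.mem_iUnion.2 ⟨i, h⟩))
    simpa [hcdef] using (norm_pos_iff.mpr this)
  have hzZofE : ∀ z, z ∉ E → z ∉ Z := fun z hz h => hz (Or.inl h)
  have hp2mem : ∀ p ∈ Metric.ball p₀ ε, p.2 ∈ Metric.closedBall p₀.2 ε := by
    intro p hp
    rw [Metric.mem_closedBall]
    have h1 : dist p.2 p₀.2 ≤ dist p p₀ := by
      rw [Prod.dist_eq]; exact le_max_right _ _
    exact le_trans h1 (Metric.mem_ball.1 hp).le
  -- norm of the product
  have hGnorm : ∀ z, z ∉ E → ∀ a : Fin r → ℂ,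
      ‖∏ i, ((c i z : ℝ) : ℂ) ^ (2 * a i)‖ = ∏ i, (c i z) ^ (2 * (a i).re) := by
    intro z hz a
    rw [Complex.norm_prod]
    refine Finset.prod_congr rfl fun i _ => ?_
    rw [Complex.norm_cpow_eq_rpow_re_of_pos (hcpos z hz i)]
    congr 1
    simp [Complex.mul_re]
  have hprod_le : ∀ z ∈ K, z ∉ E → ∀ p ∈ Metric.ball p₀ ε,
      ‖∏ i, ((c i z : ℝ) : ℂ) ^ (2 * p.1 i)‖ ≤ B1 := by
    intro z hzK hz p hp
    rw [hGnorm z hz p.1]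
    calc ∏ i, (c i z) ^ (2 * (p.1 i).re)
        ≤ ∏ _i : Fin r, β := by
          refine Finset.prod_le_prod (fun i _ => Real.rpow_nonneg (hcpos z hz i).le _)
            (fun i _ => ?_)
          exact aux_rpow_le (hcpos z hz i) (hC i z hzK) hε (hlow p hp i) (hhigh p hp i)
      _ = B1 := by simp [hB1def, Finset.prod_const, Finset.card_univ]
  have hprodlog_le : ∀ z ∈ K, z ∉ E → ∀ p ∈ Metric.ball p₀ ε, ∀ i₀,
      ‖∏ i, ((c i z : ℝ) : ℂ) ^ (2 * p.1 i)‖ * |Real.log (c i₀ z)| ≤ B1 * D₀ := by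
    intro z hzK hz p hp i₀
    rw [hGnorm z hz p.1]
    rw [← Finset.mul_prod_erase Finset.univ _ (Finset.mem_univ i₀)]
    have h1 : ∏ j ∈ Finset.univ.erase i₀, (c j z) ^ (2 * (p.1 j).re) ≤ B1 := by
      calc ∏ j ∈ Finset.univ.erase i₀, (c j z) ^ (2 * (p.1 j).re)
          ≤ ∏ _j ∈ Finset.univ.erase i₀, β :=
            Finset.prod_le_prod (fun j _ => Real.rpow_nonneg (hcpos z hz j).le _)
              (fun j _ => aux_rpow_le (hcpos z hz j) (hC j z hzK) hε (hlow p hp j) (hhigh p hp j))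
        _ = β ^ (Finset.univ.erase i₀).card := by rw [Finset.prod_const]
        _ ≤ B1 := by
            rw [hB1def]
            exact pow_le_pow_right₀ hβ1 (le_trans (Finset.card_erase_le)
              (by simp [Finset.card_univ]))
    have h2 : (c i₀ z) ^ (2 * (p.1 i₀).re) * |Real.log (c i₀ z)| ≤ D₀ := by
      simpa [hD₀def, hbdef, hβdef] using
        aux_rpow_log_le (hcpos z hz i₀) (hC i₀ z hzK) hε (hlow p hp i₀) (hhigh p hp i₀)
    calc ((c i₀ z) ^ (2 * (p.1 i₀).re) * ∏ j ∈ Finset.univ.erase i₀, (c j z) ^ (2 * (p.1 j).re))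
          * |Real.log (c i₀ z)|
        = (∏ j ∈ Finset.univ.erase i₀, (c j z) ^ (2 * (p.1 j).re))
          * ((c i₀ z) ^ (2 * (p.1 i₀).re) * |Real.log (c i₀ z)|) := by ring
      _ ≤ B1 * D₀ := by
          refine mul_le_mul h1 h2 ?_ hB10
          exact mul_nonneg (Real.rpow_nonneg (hcpos z hz i₀).le _) (abs_nonneg _)
  -- measurability of the integrand
  have hFm : ∀ p : (Fin r → ℂ) × (Fin l → ℂ), Measurable fun z : Fin n → ℂ =>
      (∏ i, ((c i z : ℝ) : ℂ) ^ (2 * p.1 i)) * ψ z p.2 := by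
    intro p
    apply Measurable.mul
    · apply Finset.measurable_prod
      intro i _
      apply measurable_cpow_const
      exact (Complex.continuous_ofReal.comp
        (continuous_norm.comp (MvPolynomial.continuous_eval (f i)))).measurable
    · exact hmeas.comp (measurable_id.prodMk measurable_const)
  -- apply the dominated differentiation theorem
  refine HasFDerivAt.differentiableAt
    (hasFDerivAt_integral_of_dominated_of_fderiv_le (F' := F') (bound := bound) (Metric.ball_mem_nhds p₀ hε)
      ?_ ?_ ?_ ?_ ?_ ?_)
  · -- hF_meas
    exact Filter.Eventually.of_forall fun p => (hFm p).aestronglyMeasurable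
  · -- hF_int
    refine Integrable.mono' (g := K.indicator fun _ => B1 * Mψ)
      ((integrable_indicator_iff hK.measurableSet).2
        (integrableOn_const hK.measure_lt_top.ne))
      (hFm p₀).aestronglyMeasurable ?_
    filter_upwards [haeE] with z hz
    by_cases hzK : z ∈ K
    · rw [Set.indicator_of_mem hzK]
      rw [norm_mul]
      refine mul_le_mul (hprod_le z hzK hz p₀ (Metric.mem_ball_self hε))
        (hMψ z (hzZofE z hz) p₀.2 (Metric.mem_closedBall_self hε.le))
        (norm_nonneg _) hB10
    · rw [Set.indicator_of_notMem hzK]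
      simp [hsupp z hzK p₀.2]
  · -- hF'_meas
    have hbasem : ∀ i : Fin r, Measurable fun z : Fin n → ℂ =>
        ((c i z : ℝ) : ℂ) :=
      fun i => (Complex.continuous_ofReal.comp
        (continuous_norm.comp (MvPolynomial.continuous_eval (f i)))).measurable
    have hGm : Measurable fun z : Fin n → ℂ => ∏ i, ((c i z : ℝ) : ℂ) ^ (2 * p₀.1 i) :=
      Finset.measurable_prod _ fun i _ => measurable_cpow_const (hbasem i) _
    have hψm : Measurable fun z : Fin n → ℂ => ψ z p₀.2 :=
      hmeas.comp (measurable_id.prodMk measurable_const)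
    have hlogm : ∀ i : Fin r, Measurable fun z : Fin n → ℂ => Complex.log ((c i z : ℝ) : ℂ) :=
      fun i => Complex.measurable_log.comp (hbasem i)
    have hDm : ∀ k : Fin l,
        AEMeasurable (fun z : Fin n → ℂ => fderiv ℂ (ψ z) p₀.2 (Pi.single k 1)) volume :=
      fun k => aux_fderiv_aemeasurable hZ hmeas hhol p₀.2 (Pi.single k 1)
    have h1 : AEStronglyMeasurable (fun z : Fin n → ℂ =>
        ∑ k : Fin l, ((∏ i, ((c i z : ℝ) : ℂ) ^ (2 * p₀.1 i))
            * fderiv ℂ (ψ z) p₀.2 (Pi.single k 1)) •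
          ((ContinuousLinearMap.proj k : (Fin l → ℂ) →L[ℂ] ℂ).comp
            (ContinuousLinearMap.snd ℂ (Fin r → ℂ) (Fin l → ℂ)))) volume := by
      refine Finset.aestronglyMeasurable_fun_sum _ fun k _ => ?_
      exact ((hGm.aemeasurable.mul (hDm k)).aestronglyMeasurable).smul_const _
    have h2 : AEStronglyMeasurable (fun z : Fin n → ℂ =>
        ∑ i : Fin r, (ψ z p₀.2 * ((∏ j, ((c j z : ℝ) : ℂ) ^ (2 * p₀.1 j))
            * (2 * Complex.log ((c i z : ℝ) : ℂ)))) •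
          ((ContinuousLinearMap.proj i : (Fin r → ℂ) →L[ℂ] ℂ).comp
            (ContinuousLinearMap.fst ℂ (Fin r → ℂ) (Fin l → ℂ)))) volume := by
      refine Finset.aestronglyMeasurable_fun_sum _ fun i _ => ?_
      exact (((hψm.mul (hGm.mul (measurable_const.mul (hlogm i)))).aemeasurable
        ).aestronglyMeasurable).smul_const _
    refine (h1.add h2).congr (Filter.Eventually.of_forall fun z => ?_)
    apply ContinuousLinearMap.ext
    intro q
    have hq2 : q.2 = ∑ k, q.2 k • (Pi.single k (1:ℂ) : Fin l → ℂ) := by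
      ext j; simp [Pi.single_apply]
    have hDq : fderiv ℂ (ψ z) p₀.2 q.2
        = ∑ k, q.2 k * fderiv ℂ (ψ z) p₀.2 (Pi.single k 1) := by
      conv_lhs => rw [hq2]
      rw [map_sum]
      exact Finset.sum_congr rfl fun k _ => by
        rw [ContinuousLinearMap.map_smul]; simp [smul_eq_mul]
    have hTq : (T z) q.1 = ∑ i, 2 * Complex.log ((c i z : ℝ) : ℂ) * q.1 i := by
      simp only [hTdef, ContinuousLinearMap.sum_apply, ContinuousLinearMap.smul_apply,
        ContinuousLinearMap.proj_apply, smul_eq_mul]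
    simp only [hF'def, Pi.add_apply, ContinuousLinearMap.add_apply,
      ContinuousLinearMap.smul_apply, ContinuousLinearMap.coe_comp', Function.comp_apply,
      ContinuousLinearMap.coe_snd', ContinuousLinearMap.coe_fst',
      ContinuousLinearMap.sum_apply, ContinuousLinearMap.proj_apply, smul_eq_mul]
    rw [hDq, hTq, Finset.mul_sum, Finset.mul_sum, Finset.mul_sum]
    congr 1
    · exact Finset.sum_congr rfl fun k _ => by ring
    · exact Finset.sum_congr rfl fun i _ => by ring
  · -- h_bound
    filter_upwards [haeE] with z hz
    intro p hp
    have hzZ : z ∉ Z := hzZofE z hz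
    by_cases hzK : z ∈ K
    · rw [hbounddef, Set.indicator_of_mem hzK]
      have hDop : ‖fderiv ℂ (ψ z) p.2‖ ≤ SM := by
        refine aux_opnorm_pi _ _ fun k => ?_
        exact le_trans (hMd k z hzZ p.2 (hp2mem p hp)) (le_max_left _ _)
      have hTop : ‖T z‖ ≤ ∑ i, 2 * |Real.log (c i z)| := by
        refine aux_opnorm_pi _ _ fun i => ?_
        have : (T z) (Pi.single i 1) = 2 * Complex.log (c i z) := by
          simp only [hTdef, ContinuousLinearMap.sum_apply, ContinuousLinearMap.smul_apply,
            ContinuousLinearMap.proj_apply, smul_eq_mul]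
          rw [Finset.sum_eq_single i]
          · simp
          · intro j _ hj
            simp [Pi.single_apply, hj.symm]
          · simp
        rw [this]
        rw [← Complex.ofReal_log (hcpos z hz i).le]
        simp
      have habs := hprod_le z hzK hz p hp
      have hψb := hMψ z hzZ p.2 (hp2mem p hp)
      have hG0 : (0:ℝ) ≤ ‖∏ i, ((c i z : ℝ) : ℂ) ^ (2 * p.1 i)‖ :=
        norm_nonneg _
      calc ‖F' p z‖
          ≤ ‖(∏ i, ((c i z : ℝ) : ℂ) ^ (2 * p.1 i)) •
              ((fderiv ℂ (ψ z) p.2).comp (ContinuousLinearMap.snd ℂ (Fin r → ℂ) (Fin l → ℂ)))‖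
            + ‖(ψ z p.2) • ((∏ i, ((c i z : ℝ) : ℂ) ^ (2 * p.1 i)) •
              ((T z).comp (ContinuousLinearMap.fst ℂ (Fin r → ℂ) (Fin l → ℂ))))‖ := by
            rw [hF'def]; exact norm_add_le _ _
        _ ≤ B1 * SM + Mψ * (2 * r * (B1 * D₀)) := by
            refine add_le_add ?_ ?_
            · refine le_trans (ContinuousLinearMap.opNorm_smul_le _ _) ?_
              refine mul_le_mul habs ?_ (norm_nonneg _) hB10
              refine le_trans (ContinuousLinearMap.opNorm_comp_le _ _) ?_
              calc ‖fderiv ℂ (ψ z) p.2‖ * ‖ContinuousLinearMap.snd ℂ (Fin r → ℂ) (Fin l → ℂ)‖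
                  ≤ ‖fderiv ℂ (ψ z) p.2‖ * 1 :=
                    mul_le_mul_of_nonneg_left (ContinuousLinearMap.norm_snd_le ℂ (Fin r → ℂ) (Fin l → ℂ)) (norm_nonneg _)
                _ = ‖fderiv ℂ (ψ z) p.2‖ := mul_one _
                _ ≤ SM := hDop
            · refine le_trans (ContinuousLinearMap.opNorm_smul_le _ _) ?_
              refine mul_le_mul hψb
                (le_trans (ContinuousLinearMap.opNorm_smul_le _ _) ?_) (norm_nonneg _) hMψ0
              have hTf : ‖(T z).comp (ContinuousLinearMap.fst ℂ (Fin r → ℂ) (Fin l → ℂ))‖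
                  ≤ ‖T z‖ := by
                refine le_trans (ContinuousLinearMap.opNorm_comp_le _ _) ?_
                calc ‖T z‖ * ‖ContinuousLinearMap.fst ℂ (Fin r → ℂ) (Fin l → ℂ)‖
                    ≤ ‖T z‖ * 1 :=
                      mul_le_mul_of_nonneg_left (ContinuousLinearMap.norm_fst_le ℂ (Fin r → ℂ) (Fin l → ℂ)) (norm_nonneg _)
                  _ = ‖T z‖ := mul_one _
              calc ‖(∏ i, ((c i z : ℝ) : ℂ) ^ (2 * p.1 i))‖
                    * ‖(T z).comp (ContinuousLinearMap.fst ℂ (Fin r → ℂ) (Fin l → ℂ))‖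
                  ≤ ‖∏ i, ((c i z : ℝ) : ℂ) ^ (2 * p.1 i)‖
                    * (∑ i, 2 * |Real.log (c i z)|) := by
                    exact mul_le_mul_of_nonneg_left (le_trans hTf hTop) hG0
                _ = ∑ i, 2 * (‖∏ j, ((c j z : ℝ) : ℂ) ^ (2 * p.1 j)‖
                    * |Real.log (c i z)|) := by
                    rw [Finset.mul_sum]
                    exact Finset.sum_congr rfl fun i _ => by ring
                _ ≤ ∑ _i : Fin r, 2 * (B1 * D₀) := by
                    refine Finset.sum_le_sum fun i _ => ?_
                    have := hprodlog_le z hzK hz p hp i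
                    linarith
                _ = 2 * r * (B1 * D₀) := by
                    rw [Finset.sum_const, Finset.card_univ, Fintype.card_fin]
                    simp [nsmul_eq_mul]; ring
        _ = CC := by rw [hCCdef]
    · rw [hbounddef, Set.indicator_of_notMem hzK]
      have hψz : ψ z = fun _ => (0:ℂ) := funext (hsupp z hzK)
      have hd0 : fderiv ℂ (ψ z) p.2 = 0 := by rw [hψz]; simp
      have : F' p z = 0 := by
        rw [hF'def]
        simp [hd0, hsupp z hzK p.2, zero_smul]
        exact ContinuousLinearMap.ext fun q => by simp
      rw [this, norm_zero]
  · -- bound integrable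
    exact (integrable_indicator_iff hK.measurableSet).2
      (integrableOn_const hK.measure_lt_top.ne)
  · -- h_diff
    filter_upwards [haeE] with z hz
    intro p hp
    have hzZ : z ∉ Z := hzZofE z hz
    have hcne : ∀ i, ((c i z : ℝ) : ℂ) ≠ 0 :=
      fun i => Complex.ofReal_ne_zero.2 (hcpos z hz i).ne'
    have hGexp : ∀ a : Fin r → ℂ,
        (∏ i, ((c i z : ℝ) : ℂ) ^ (2 * a i)) = Complex.exp ((T z) a) := by
      intro a
      have hTa : (T z) a = ∑ i, Complex.log (c i z) * (2 * a i) := by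
        simp only [hTdef, ContinuousLinearMap.sum_apply, ContinuousLinearMap.smul_apply,
          ContinuousLinearMap.proj_apply, smul_eq_mul]
        exact Finset.sum_congr rfl fun i _ => by ring
      rw [hTa, Complex.exp_sum]
      exact Finset.prod_congr rfl fun i _ => Complex.cpow_def_of_ne_zero (hcne i) _
    have h1 : HasFDerivAt (fun q : (Fin r → ℂ) × (Fin l → ℂ) =>
          ∏ i, ((c i z : ℝ) : ℂ) ^ (2 * q.1 i))
        ((∏ i, ((c i z : ℝ) : ℂ) ^ (2 * p.1 i)) •
          ((T z).comp (ContinuousLinearMap.fst ℂ (Fin r → ℂ) (Fin l → ℂ)))) p := by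
      have hT : HasFDerivAt (fun q : (Fin r → ℂ) × (Fin l → ℂ) => (T z) q.1)
          ((T z).comp (ContinuousLinearMap.fst ℂ (Fin r → ℂ) (Fin l → ℂ))) p :=
        ((T z).comp (ContinuousLinearMap.fst ℂ (Fin r → ℂ) (Fin l → ℂ))).hasFDerivAt
      have hexp := hT.cexp
      rw [show (fun q : (Fin r → ℂ) × (Fin l → ℂ) => ∏ i, ((c i z : ℝ) : ℂ) ^ (2 * q.1 i))
          = (fun q : (Fin r → ℂ) × (Fin l → ℂ) => Complex.exp ((T z) q.1))
          from funext fun q => hGexp q.1]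
      rw [hGexp p.1]
      exact hexp
    have h2 : HasFDerivAt (fun q : (Fin r → ℂ) × (Fin l → ℂ) => ψ z q.2)
        ((fderiv ℂ (ψ z) p.2).comp (ContinuousLinearMap.snd ℂ (Fin r → ℂ) (Fin l → ℂ))) p := by
      have hs : HasFDerivAt (fun q : (Fin r → ℂ) × (Fin l → ℂ) => q.2)
          (ContinuousLinearMap.snd ℂ (Fin r → ℂ) (Fin l → ℂ)) p :=
        (ContinuousLinearMap.snd ℂ (Fin r → ℂ) (Fin l → ℂ)).hasFDerivAt
      exact (((hhol z hzZ) p.2).hasFDerivAt).comp p hs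
    exact h1.mul h2
end

section
/- Let p ∈ ℝ and a ∈ ℂ*. Then ∫₀^{2π} |a⁻¹λe^{iγ} + 1|^{p} · log|a⁻¹λe^{iγ} + 1| dγ = O(λ²) as λ → 0⁺. -/
open scoped Real

lemma log_near (t : ℝ) (ht : |t| ≤ 1/2) : |Real.log (1+t) - t| ≤ 2 * t^2 := by
  have h : |(-t)| < 1 := by rw [abs_neg]; linarith
  have H := Real.abs_log_sub_add_sum_range_le h 1
  simp only [Finset.sum_range_one, pow_one, Nat.cast_zero, zero_add, div_one, abs_neg,
    sub_neg_eq_add] at H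
  rw [show (1+1 : ℕ) = 2 from rfl, sq_abs] at H
  have h2 : t^2/(1-|t|) ≤ 2*t^2 := by
    rw [div_le_iff₀ (by linarith)]
    nlinarith [sq_nonneg t, abs_nonneg t]
  have e : Real.log (1+t) - t = -t + Real.log (1+t) := by ring
  rw [e]
  exact H.trans h2

lemma rpow_bound (q s : ℝ) (h1 : 1/2 ≤ s) (h2 : s ≤ 2) : s ^ q ≤ 2 ^ |q| := by
  rcases le_or_gt 0 q with hq | hq
  · calc s ^ q ≤ 2 ^ q := Real.rpow_le_rpow (by linarith) h2 hq
      _ ≤ 2 ^ |q| := Real.rpow_le_rpow_of_exponent_le one_le_two (le_abs_self q)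
  · calc s ^ q ≤ (1/2) ^ q := Real.rpow_le_rpow_of_nonpos (by norm_num) h1 hq.le
      _ = 2 ^ (-q) := by
          rw [one_div, Real.inv_rpow (by norm_num), ← Real.rpow_neg (by norm_num)]
      _ ≤ 2 ^ |q| := Real.rpow_le_rpow_of_exponent_le one_le_two (neg_le_abs q)

lemma rpow_lip (q : ℝ) {t : ℝ} (ht : |t| ≤ 1/2) :
    |(1+t) ^ q - 1| ≤ (|q| * 2 ^ |q-1|) * |t| := by
  set s : Set ℝ := Set.Icc (-(1/2) : ℝ) (1/2) with hs
  have hts : t ∈ s := abs_le.mp ht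
  have h0s : (0:ℝ) ∈ s := by constructor <;> norm_num
  have key := Convex.norm_image_sub_le_of_norm_hasDerivWithin_le
    (f := fun x => (1+x) ^ q) (f' := fun x => 1 * q * (1+x) ^ (q-1))
    (s := s) (C := |q| * 2 ^ |q-1|)
    (fun x hx => by
      have hx' : (1:ℝ)/2 ≤ 1 + x := by linarith [hx.1]
      exact (((hasDerivAt_id x).const_add 1).hasDerivWithinAt).rpow_const
        (Or.inl (by positivity)))
    (fun x hx => by
      have hx1 : (1:ℝ)/2 ≤ 1 + x := by linarith [hx.1]
      have hx2 : 1 + x ≤ 2 := by linarith [hx.2]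
      have hb := rpow_bound (q-1) (1+x) hx1 hx2
      have hnn : (0:ℝ) ≤ (1+x) ^ (q-1) := Real.rpow_nonneg (by linarith) _
      rw [Real.norm_eq_abs, one_mul, abs_mul, abs_of_nonneg hnn]
      exact mul_le_mul_of_nonneg_left hb (abs_nonneg q))
    (convex_Icc _ _) h0s hts
  simpa using key

lemma taylor_bd (q : ℝ) : ∃ K > (0:ℝ), ∀ t : ℝ, |t| ≤ 1/2 →
    |(1+t) ^ q * Real.log (1+t) - t| ≤ K * t^2 := by
  refine ⟨2 * 2 ^ |q| + |q| * 2 ^ |q-1| + 1, by positivity, fun t ht => ?_⟩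
  have h1 : (1:ℝ)/2 ≤ 1 + t := by
    have := abs_le.mp ht; linarith [this.1]
  have h2 : 1 + t ≤ 2 := by have := abs_le.mp ht; linarith [this.2]
  have e : (1+t) ^ q * Real.log (1+t) - t
      = (1+t) ^ q * (Real.log (1+t) - t) + ((1+t) ^ q - 1) * t := by ring
  have hA : |(1+t) ^ q * (Real.log (1+t) - t)| ≤ 2 ^ |q| * (2 * t^2) := by
    rw [abs_mul]
    have hnn : (0:ℝ) ≤ (1+t) ^ q := Real.rpow_nonneg (by linarith) _
    rw [abs_of_nonneg hnn]
    exact mul_le_mul (rpow_bound q (1+t) h1 h2) (log_near t ht) (abs_nonneg _)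
      (by positivity)
  have hB : |((1+t) ^ q - 1) * t| ≤ (|q| * 2 ^ |q-1|) * t^2 := by
    rw [abs_mul]
    calc |(1+t)^q - 1| * |t| ≤ ((|q| * 2 ^ |q-1|) * |t|) * |t| :=
          mul_le_mul_of_nonneg_right (rpow_lip q ht) (abs_nonneg t)
      _ = (|q| * 2 ^ |q-1|) * t^2 := by rw [mul_assoc, ← sq_abs]; ring
  calc |(1+t) ^ q * Real.log (1+t) - t| ≤ _ + _ := e ▸ abs_add_le _ _
    _ ≤ 2 ^ |q| * (2 * t^2) + (|q| * 2 ^ |q-1|) * t^2 := add_le_add hA hB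
    _ ≤ (2 * 2 ^ |q| + |q| * 2 ^ |q-1| + 1) * t^2 := by nlinarith [sq_nonneg t]

set_option maxHeartbeats 1600000 in
/-- For p ∈ ℝ and a ∈ ℂ*,
    ∫₀^{2π} |a⁻¹λe^{iγ}+1|^p · log|a⁻¹λe^{iγ}+1| dγ = O(λ²) as λ → 0⁺. -/
theorem stmt16 (p : ℝ) (a : ℂ) (ha : a ≠ 0) :
    ∃ C > (0 : ℝ), ∃ ε > (0 : ℝ), ∀ lam ∈ Set.Ioo (0 : ℝ) ε,
      |∫ γ in (0 : ℝ)..(2 * π),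
          ‖a⁻¹ * (lam : ℂ) * Complex.exp (γ * Complex.I) + 1‖ ^ p *
            Real.log ‖a⁻¹ * (lam : ℂ) * Complex.exp (γ * Complex.I) + 1‖|
        ≤ C * lam ^ 2 := by
  obtain ⟨K, hK0, hK⟩ := taylor_bd (p/2)
  set b : ℂ := a⁻¹ with hbdef
  have hb : b ≠ 0 := inv_ne_zero ha
  set r : ℝ := ‖b‖ with hrdef
  have hr0 : 0 < r := by simpa [hrdef] using norm_pos_iff.mpr hb
  clear_value b r
  refine ⟨(9*K+1)*r^2/2 * (2*π) + 1, by positivity, min 1 (1/(5*r)), by positivity, ?_⟩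
  rintro lam ⟨hl0, hlu⟩
  have hl1 : lam < 1 := lt_of_lt_of_le hlu (min_le_left _ _)
  have hlr : lam * r < 1/5 := by
    have h := lt_of_lt_of_le hlu (min_le_right _ _)
    rw [lt_div_iff₀ (by positivity)] at h
    nlinarith
  have hlr0 : (0:ℝ) ≤ lam * r := by positivity
  -- pointwise facts
  have main : ∀ γ : ℝ,
      0 < ‖b * (lam:ℂ) * Complex.exp ((γ:ℝ) * Complex.I) + 1‖ ∧
      |‖b * (lam:ℂ) * Complex.exp ((γ:ℝ) * Complex.I) + 1‖ ^ p *
        Real.log (‖b * (lam:ℂ) * Complex.exp ((γ:ℝ) * Complex.I) + 1‖)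
        - lam * (b * Complex.exp ((γ:ℝ) * Complex.I)).re| ≤ (9*K+1)*r^2/2 * lam^2 := by
    intro γ
    set z : ℂ := b * Complex.exp ((γ:ℝ) * Complex.I) with hz
    have habsz : ‖z‖ = r := by
      rw [hz, norm_mul, Complex.norm_exp_ofReal_mul_I, mul_one, hrdef]
    have hcr : |z.re| ≤ r := habsz ▸ Complex.abs_re_le_norm z
    have hc1 : z.re ≤ r := (abs_le.mp hcr).2
    have hc2 : -r ≤ z.re := (abs_le.mp hcr).1
    set t : ℝ := 2*(lam*z.re) + (lam*r)^2 with hts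
    clear_value t
    have hw : b * (lam:ℂ) * Complex.exp ((γ:ℝ) * Complex.I) = (lam:ℂ) * z := by
      rw [hz]; ring
    clear_value z
    have hnsz : Complex.normSq z = r^2 := by rw [← Complex.sq_norm, habsz]
    have hnormsq : Complex.normSq ((lam:ℂ) * z + 1) = 1 + t := by
      rw [Complex.normSq_add, Complex.normSq_mul, Complex.normSq_ofReal, hnsz]
      simp [Complex.mul_re, hts]
      ring
    have ht12 : |t| ≤ 1/2 := by
      rw [abs_le]
      constructor <;> nlinarith [mul_le_mul_of_nonneg_left hc1 hl0.le,
        mul_le_mul_of_nonneg_left hc2 hl0.le, sq_nonneg (lam*r)]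
    have h3ab : |t| ≤ 3*(lam*r) := by
      rw [abs_le]
      constructor <;> nlinarith [mul_le_mul_of_nonneg_left hc1 hl0.le,
        mul_le_mul_of_nonneg_left hc2 hl0.le, sq_nonneg (lam*r)]
    have htsq : t^2 ≤ 9*(lam*r)^2 := by
      obtain ⟨hta, htb⟩ := abs_le.mp h3ab
      nlinarith
    have h1tpos : (0:ℝ) < 1 + t := by nlinarith [abs_le.mp ht12]
    have heval : ‖(lam:ℂ) * z + 1‖ = Real.sqrt (1+t) := by
      rw [Complex.norm_def, hnormsq]
    rw [hw, heval]
    refine ⟨Real.sqrt_pos.mpr h1tpos, ?_⟩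
    rw [Real.log_sqrt h1tpos.le, Real.sqrt_eq_rpow, ← Real.rpow_mul h1tpos.le,
      show (1/(2:ℝ)) * p = p/2 by ring]
    have e2 : (1+t)^(p/2) * (Real.log (1+t)/2) - lam * z.re
        = ((1+t)^(p/2) * Real.log (1+t) - t)/2 + (lam*r)^2/2 := by
      rw [hts]; ring
    rw [e2]
    have hKt := hK t ht12
    calc |((1+t)^(p/2) * Real.log (1+t) - t)/2 + (lam*r)^2/2|
        ≤ |((1+t)^(p/2) * Real.log (1+t) - t)/2| + |(lam*r)^2/2| := abs_add_le _ _
      _ ≤ K*t^2/2 + (lam*r)^2/2 := by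
          have hx : |((1+t)^(p/2) * Real.log (1+t) - t)/2|
              = |(1+t)^(p/2) * Real.log (1+t) - t|/2 := by rw [abs_div, abs_two]
          have hy : |(lam*r)^2/2| = (lam*r)^2/2 := abs_of_nonneg (by positivity)
          rw [hx, hy]
          linarith
      _ ≤ (9*K+1)*r^2/2 * lam^2 := by
          have h5 : K*t^2 ≤ K*(9*(lam*r)^2) := mul_le_mul_of_nonneg_left htsq hK0.le
          nlinarith [h5]
  -- continuity and integrals
  set F : ℝ → ℝ := fun γ =>
    ‖b * (lam:ℂ) * Complex.exp ((γ:ℝ) * Complex.I) + 1‖ ^ p *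
      Real.log (‖b * (lam:ℂ) * Complex.exp ((γ:ℝ) * Complex.I) + 1‖) with hF
  set G : ℝ → ℝ := fun γ => lam * (b * Complex.exp ((γ:ℝ) * Complex.I)).re with hG
  clear_value F G
  have hc1 : Continuous fun γ : ℝ => b * (lam:ℂ) * Complex.exp ((γ:ℝ) * Complex.I) + 1 := by
    fun_prop
  have hc2 : Continuous fun γ : ℝ =>
      ‖b * (lam:ℂ) * Complex.exp ((γ:ℝ) * Complex.I) + 1‖ :=
    continuous_norm.comp hc1
  have hFcont : Continuous F := by
    rw [hF]
    exact (hc2.rpow_const fun γ => Or.inl (main γ).1.ne').mul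
      (hc2.log fun γ => (main γ).1.ne')
  have hGcont : Continuous G := by rw [hG]; fun_prop
  have hFint : IntervalIntegrable F MeasureTheory.volume 0 (2*π) :=
    hFcont.intervalIntegrable _ _
  have hGint : IntervalIntegrable G MeasureTheory.volume 0 (2*π) :=
    hGcont.intervalIntegrable _ _
  have hGzero : (∫ γ in (0:ℝ)..(2*π), G γ) = 0 := by
    have hGe : G = fun γ => lam * b.re * Real.cos γ - lam * b.im * Real.sin γ := by
      funext γ
      rw [hG]
      simp [Complex.mul_re, Complex.exp_ofReal_mul_I_re, Complex.exp_ofReal_mul_I_im]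
      ring
    rw [hGe, intervalIntegral.integral_sub (f := fun γ : ℝ => lam * b.re * Real.cos γ)
      (g := fun γ : ℝ => lam * b.im * Real.sin γ)
      ((continuous_const.mul Real.continuous_cos).intervalIntegrable _ _)
      ((continuous_const.mul Real.continuous_sin).intervalIntegrable _ _),
      intervalIntegral.integral_const_mul, intervalIntegral.integral_const_mul,
      integral_cos, integral_sin]
    simp [Real.sin_two_pi, Real.cos_two_pi]
  have hsplit : (∫ γ in (0:ℝ)..(2*π), F γ) = ∫ γ in (0:ℝ)..(2*π), (F γ - G γ) := by
    rw [intervalIntegral.integral_sub hFint hGint, hGzero, sub_zero]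
  have hbound : ‖∫ γ in (0:ℝ)..(2*π), (F γ - G γ)‖ ≤ (9*K+1)*r^2/2 * lam^2 * |2*π - 0| :=
    intervalIntegral.norm_integral_le_of_norm_le_const
      (fun x _ => by rw [Real.norm_eq_abs]; simp only [hF, hG]; exact (main x).2)
  rw [Real.norm_eq_abs] at hbound
  have hpi : |2*π - 0| = 2*π := by
    rw [sub_zero]; exact abs_of_nonneg (by positivity)
  rw [hpi] at hbound
  calc |∫ γ in (0:ℝ)..(2*π), F γ| = |∫ γ in (0:ℝ)..(2*π), (F γ - G γ)| := by rw [hsplit]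
    _ ≤ (9*K+1)*r^2/2 * lam^2 * (2*π) := hbound
    _ ≤ ((9*K+1)*r^2/2 * (2*π) + 1) * lam^2 := by nlinarith [sq_nonneg lam, Real.pi_pos]
end
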